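/- Let ▷ : A × V → V be a bilinear map with V given the trivial (zero) multiplication, and f = 0. Then V × A with multiplication (x,a)∘(y,b) = (a▷y + b▷x, a·b) is a 4-algebra if and only if a²▷(a▷x) = 0 for all a ∈ A and x ∈ V, i.e. if and only if (V, ▷) is an A-module. -/
import Mathlib


structure FourAlgebra (k : Type*) (A : Type*) [Field k] [AddCommGroup A] [Module k A] where
  mul : A →ₗ[k] A →ₗ[k] A
  comm : ∀ a b : A, mul a b = mul b a
  four : ∀ a : A, mul (mul a a) (mul a a) = 0

/-- With trivial cocycle and trivial multiplication on V, the multiplication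
(x,a)∘(y,b) = (a▷y + b▷x, a·b) on V × A is a 4-algebra structure iff
a²▷(a▷x) = 0 for all a, x, i.e. iff (V, ▷) is an A-module. -/
theorem stmt9 (k A V : Type*) [Field k] [AddCommGroup A] [Module k A]
    [AddCommGroup V] [Module k V] (h2 : (2 : k) ≠ 0) (FA : FourAlgebra k A)
    (tr : A →ₗ[k] V →ₗ[k] V) :
    let p : V × A → V × A → V × A := fun z w =>
      (tr z.2 w.1 + tr w.2 z.1, FA.mul z.2 w.2)
    ((∀ z w, p z w = p w z) ∧ (∀ z, p (p z z) (p z z) = 0)) ↔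
      (∀ (a : A) (x : V), tr (FA.mul a a) (tr a x) = 0) := by
  intro p
  constructor
  · rintro ⟨-, h4⟩ a x
    have h := congrArg Prod.fst (h4 (x, a))
    simp only [p, map_add, Prod.fst_zero] at h
    set t := tr (FA.mul a a) (tr a x) with ht
    have h22 : (2 : k) • ((2 : k) • t) = 0 := by
      rw [two_smul, two_smul]
      abel_nf
      abel_nf at h
      convert h using 2
    have := (smul_eq_zero.mp ((smul_eq_zero.mp h22).resolve_left h2)).resolve_left h2
    exact this
  · intro h
    refine ⟨fun z w => ?_, fun z => ?_⟩
    · exact Prod.ext (add_comm _ _) (FA.comm _ _)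
    · refine Prod.ext ?_ ?_
      · simp only [p, map_add, h, Prod.fst_zero]
        abel
      · exact FA.four _
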